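/- arXiv:1109.2359 — 3 statements merged into one kernel-verified Lean document; each statement's English description precedes it below -/
import Mathlib

section
/- For weight vectors ω, χ : Fin (n+1) → ℕ with positive coordinates, there is a unique continuous map e(χ/ω) : P(ω) → P(χ) such that for every z ∈ S^{2n+1} one has e(χ/ω)([z]_ω) = [N_χ(v)]_χ, where v = (z_0^{d_0}, …, z_n^{d_n}) and d_i = s(χ,ω)·χ_i/ω_i; in particular v ≠ 0, and the right-hand side is independent of the chosen representative z of the class [z]_ω. -/
noncomputable section

/-- The unit sphere in `ℂ^m` (the sphere `S^{2m-1}`). -/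
abbrev Sph (m : ℕ) : Type := {z : Fin m → ℂ // ∑ i, ‖z i‖ ^ 2 = 1}

/-- The relation on the sphere whose quotient is the weighted projective space `P(χ)`:
`z ∼ w` iff `w = t ·_χ z` for some unimodular `t`. -/
def wRel (m : ℕ) (χ : Fin m → ℕ) (z w : Sph m) : Prop :=
  ∃ t : ℂ, ‖t‖ = 1 ∧ ∀ i, (w : Fin m → ℂ) i = t ^ χ i * (z : Fin m → ℂ) i

/-- The weighted projective space `P(χ)`, with the quotient topology. -/
abbrev WP (m : ℕ) (χ : Fin m → ℕ) : Type := Quot (wRel m χ)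

/-- The class `[z]_χ` of a point of the sphere in `P(χ)`. -/
def wpMk (m : ℕ) (χ : Fin m → ℕ) (z : Sph m) : WP m χ := Quot.mk _ z

/-- `s(χ,ω)`: the least positive integer `s` with `ω i ∣ s * χ i` for all `i`. -/
def sVal (m : ℕ) (χ ω : Fin m → ℕ) : ℕ := sInf {s : ℕ | 0 < s ∧ ∀ i, ω i ∣ s * χ i}

/-- The exponents `d i = s(χ,ω)·χ i/ω i` of the map `e(χ/ω)`. -/
def dExp (m : ℕ) (χ ω : Fin m → ℕ) (i : Fin m) : ℕ := sVal m χ ω * χ i / ω i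

/-- `IsNorm m χ v w` says that `w` is the normalisation `N_χ(v)`, i.e. `w` lies on the
sphere and has the form `(λ^{χ_0} v_0, …)` for some real `λ > 0`. -/
def IsNorm (m : ℕ) (χ : Fin m → ℕ) (v : Fin m → ℂ) (w : Sph m) : Prop :=
  ∃ l : ℝ, 0 < l ∧ ∀ i, (w : Fin m → ℂ) i = (l : ℂ) ^ χ i * v i

/-- Coordinatewise powers of a point of the sphere. -/
def powVec (m : ℕ) (d : Fin m → ℕ) (z : Sph m) : Fin m → ℂ :=
  fun i => (z : Fin m → ℂ) i ^ d i

/-- `IsEMap m χ ω e` says that `e` is the canonical map `e(χ/ω) : P(ω) → P(χ)`: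
it is continuous and sends `[z]_ω` to `[N_χ(z_0^{d_0}, …, z_n^{d_n})]_χ`. -/
def IsEMap (m : ℕ) (χ ω : Fin m → ℕ) (e : WP m ω → WP m χ) : Prop :=
  Continuous e ∧ ∀ z w : Sph m,
    IsNorm m χ (powVec m (dExp m χ ω) z) w → e (wpMk m ω z) = wpMk m χ w


section Auxiliary

lemma sVal_spec {m : ℕ} (χ ω : Fin m → ℕ) (hω : ∀ i, 1 ≤ ω i) :
    0 < sVal m χ ω ∧ ∀ i, ω i ∣ sVal m χ ω * χ i := by
  have hne : ({s : ℕ | 0 < s ∧ ∀ i, ω i ∣ s * χ i}).Nonempty := by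
    refine ⟨∏ i, ω i, Finset.prod_pos (fun i _ => hω i), fun i => ?_⟩
    exact dvd_mul_of_dvd_left (Finset.dvd_prod_of_mem ω (Finset.mem_univ i)) _
  exact Nat.sInf_mem hne

lemma omega_mul_dExp {m : ℕ} (χ ω : Fin m → ℕ) (hω : ∀ i, 1 ≤ ω i) (i : Fin m) :
    ω i * dExp m χ ω i = sVal m χ ω * χ i :=
  Nat.mul_div_cancel' ((sVal_spec χ ω hω).2 i)

lemma dExp_pos {m : ℕ} (χ ω : Fin m → ℕ) (hω : ∀ i, 1 ≤ ω i) (hχ : ∀ i, 1 ≤ χ i)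
    (i : Fin m) : 0 < dExp m χ ω i := by
  have h1 := (sVal_spec χ ω hω).1
  have h2 := (sVal_spec χ ω hω).2 i
  have : 0 < sVal m χ ω * χ i := Nat.mul_pos h1 (hχ i)
  exact Nat.div_pos (Nat.le_of_dvd this h2) (hω i)

lemma sph_exists_ne {m : ℕ} (z : Sph m) : ∃ i, (z : Fin m → ℂ) i ≠ 0 := by
  by_contra h
  push_neg at h
  have h2 := z.2
  simp [h] at h2

lemma sph_abs_le {m : ℕ} (z : Sph m) (i : Fin m) : ‖(z : Fin m → ℂ) i‖ ≤ 1 := by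
  have hle : ‖(z : Fin m → ℂ) i‖ ^ 2 ≤ 1 := by
    calc ‖(z : Fin m → ℂ) i‖ ^ 2
        ≤ ∑ j, ‖(z : Fin m → ℂ) j‖ ^ 2 :=
          Finset.single_le_sum (f := fun j => ‖(z : Fin m → ℂ) j‖ ^ 2)
            (fun j _ => by positivity) (Finset.mem_univ i)
      _ = 1 := z.2
  nlinarith [norm_nonneg ((z : Fin m → ℂ) i)]

/-- the norm function -/
def Fm {m : ℕ} (χ : Fin m → ℕ) (v : Fin m → ℂ) (l : ℝ) : ℝ :=
  ∑ i, (l ^ χ i * ‖v i‖) ^ 2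

lemma sum_abs_sq_eq_Fm {m : ℕ} (χ : Fin m → ℕ) (v : Fin m → ℂ) (l : ℝ) (hl : 0 ≤ l)
    (w : Fin m → ℂ) (hw : ∀ i, w i = (l : ℂ) ^ χ i * v i) :
    ∑ i, ‖w i‖ ^ 2 = Fm χ v l := by
  unfold Fm
  refine Finset.sum_congr rfl fun i _ => ?_
  rw [hw i, norm_mul, norm_pow, Complex.norm_real, Real.norm_of_nonneg hl]

lemma fm_continuous {m : ℕ} (χ : Fin m → ℕ) (v : Fin m → ℂ) : Continuous (Fm χ v) := by
  unfold Fm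
  fun_prop

lemma fm_zero {m : ℕ} (χ : Fin m → ℕ) (hχ : ∀ i, 1 ≤ χ i) (v : Fin m → ℂ) :
    Fm χ v 0 = 0 := by
  unfold Fm
  refine Finset.sum_eq_zero fun i _ => ?_
  rw [zero_pow (by have := hχ i; omega), zero_mul, zero_pow (by norm_num)]

lemma exists_fm_eq_one {m : ℕ} (χ : Fin m → ℕ) (hχ : ∀ i, 1 ≤ χ i) (v : Fin m → ℂ)
    (hv : ∃ j, v j ≠ 0) : ∃ l : ℝ, 0 < l ∧ Fm χ v l = 1 := by
  obtain ⟨j, hj⟩ := hv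
  set c := ‖v j‖ with hc
  have hc0 : 0 < c := by simpa [hc] using hj
  set L := max 1 c⁻¹ with hL
  have hL1 : (1:ℝ) ≤ L := le_max_left _ _
  have hLc : c⁻¹ ≤ L := le_max_right _ _
  have hFL : 1 ≤ Fm χ v L := by
    have h1 : (1:ℝ) ≤ L ^ χ j * c := by
      have h2 : L ≤ L ^ χ j := le_self_pow₀ (by linarith) (by have := hχ j; omega)
      have h3 : c⁻¹ * c ≤ L ^ χ j * c := by
        apply mul_le_mul_of_nonneg_right (le_trans hLc h2) hc0.le
      rwa [inv_mul_cancel₀ hc0.ne'] at h3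
    calc (1:ℝ) = 1 ^ 2 := by norm_num
      _ ≤ (L ^ χ j * c) ^ 2 := by nlinarith
      _ ≤ Fm χ v L := Finset.single_le_sum (f := fun i => (L ^ χ i * ‖v i‖) ^ 2)
          (fun i _ => by positivity) (Finset.mem_univ j)
  have hIcc : (1:ℝ) ∈ Set.Icc (Fm χ v 0) (Fm χ v L) := by
    rw [fm_zero χ hχ v]; exact ⟨by norm_num, hFL⟩
  obtain ⟨l, hl, hfl⟩ := intermediate_value_Icc (by linarith : (0:ℝ) ≤ L)
    (fm_continuous χ v).continuousOn hIcc
  have hlne : l ≠ 0 := by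
    rintro rfl
    rw [fm_zero χ hχ v] at hfl
    norm_num at hfl
  exact ⟨l, lt_of_le_of_ne hl.1 (Ne.symm hlne), hfl⟩

lemma fm_strictMonoOn {m : ℕ} (χ : Fin m → ℕ) (hχ : ∀ i, 1 ≤ χ i) (v : Fin m → ℂ)
    (hv : ∃ j, v j ≠ 0) : StrictMonoOn (Fm χ v) (Set.Ici 0) := by
  obtain ⟨j, hj⟩ := hv
  intro a ha b hb hab
  simp only [Set.mem_Ici] at ha hb
  unfold Fm
  refine Finset.sum_lt_sum (fun i _ => ?_) ⟨j, Finset.mem_univ j, ?_⟩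
  · have h1 : a ^ χ i ≤ b ^ χ i := pow_le_pow_left₀ ha hab.le _
    have h2 : a ^ χ i * ‖v i‖ ≤ b ^ χ i * ‖v i‖ :=
      mul_le_mul_of_nonneg_right h1 (norm_nonneg _)
    exact pow_le_pow_left₀ (by positivity) h2 2
  · have hc : 0 < ‖v j‖ := by simpa using hj
    have h1 : a ^ χ j < b ^ χ j := pow_lt_pow_left₀ hab ha (by have := hχ j; omega)
    have h2 : a ^ χ j * ‖v j‖ < b ^ χ j * ‖v j‖ :=
      mul_lt_mul_of_pos_right h1 hc
    exact pow_lt_pow_left₀ h2 (by positivity) (by norm_num)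

lemma powVec_ne {m : ℕ} (d : Fin m → ℕ) (z : Sph m) : ∃ j, powVec m d z j ≠ 0 := by
  obtain ⟨j, hj⟩ := sph_exists_ne z
  exact ⟨j, pow_ne_zero _ hj⟩

lemma exists_isNorm {m : ℕ} (χ : Fin m → ℕ) (hχ : ∀ i, 1 ≤ χ i) (v : Fin m → ℂ)
    (hv : ∃ j, v j ≠ 0) : ∃ w : Sph m, IsNorm m χ v w := by
  obtain ⟨l, hl, hfl⟩ := exists_fm_eq_one χ hχ v hv
  refine ⟨⟨fun i => (l : ℂ) ^ χ i * v i, ?_⟩, l, hl, fun i => rfl⟩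
  rw [sum_abs_sq_eq_Fm χ v l hl.le _ (fun i => rfl)]
  exact hfl

lemma isNorm_unique {m : ℕ} (χ : Fin m → ℕ) (hχ : ∀ i, 1 ≤ χ i) (v : Fin m → ℂ)
    (hv : ∃ j, v j ≠ 0) (w w' : Sph m)
    (h : IsNorm m χ v w) (h' : IsNorm m χ v w') : w = w' := by
  obtain ⟨l, hl, hw⟩ := h
  obtain ⟨l', hl', hw'⟩ := h'
  have h1 : Fm χ v l = 1 := by rw [← sum_abs_sq_eq_Fm χ v l hl.le _ hw]; exact w.2
  have h2 : Fm χ v l' = 1 := by rw [← sum_abs_sq_eq_Fm χ v l' hl'.le _ hw']; exact w'.2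
  have hll : l = l' :=
    (fm_strictMonoOn χ hχ v hv).injOn hl.le hl'.le (by rw [h1, h2])
  ext i
  rw [hw i, hw' i, hll]

lemma isNorm_compat {m : ℕ} (χ ω : Fin m → ℕ) (hχ : ∀ i, 1 ≤ χ i) (hω : ∀ i, 1 ≤ ω i)
    (z z' : Sph m) (hzz : wRel m ω z z') (w w' : Sph m)
    (hw : IsNorm m χ (powVec m (dExp m χ ω) z) w)
    (hw' : IsNorm m χ (powVec m (dExp m χ ω) z') w') : wRel m χ w w' := by
  obtain ⟨t, ht, hz'⟩ := hzz
  set d := dExp m χ ω with hd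
  set s := sVal m χ ω with hs
  have key : ∀ i, powVec m d z' i = (t ^ s) ^ χ i * powVec m d z i := by
    intro i
    simp only [powVec]
    rw [hz' i, mul_pow, ← pow_mul, ← pow_mul, hd, omega_mul_dExp χ ω hω i, ← hs]
  obtain ⟨l, hl, hwl⟩ := hw
  have hts : ‖t ^ s‖ = 1 := by rw [norm_pow, ht, one_pow]
  set w'' : Sph m := ⟨fun i => (t ^ s) ^ χ i * (w : Fin m → ℂ) i, by
    have : ∀ i, ‖(t ^ s) ^ χ i * (w : Fin m → ℂ) i‖ ^ 2
        = ‖(w : Fin m → ℂ) i‖ ^ 2 := by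
      intro i
      rw [norm_mul, norm_pow, hts, one_pow, one_mul]
    simp only [this]
    exact w.2⟩ with hw''
  have hnorm'' : IsNorm m χ (powVec m d z') w'' := by
    refine ⟨l, hl, fun i => ?_⟩
    show (t ^ s) ^ χ i * (w : Fin m → ℂ) i = _
    rw [hwl i, key i]
    ring
  have hvne : ∃ j, powVec m d z' j ≠ 0 := powVec_ne d z'
  have := isNorm_unique χ hχ _ hvne w' w'' hw' hnorm''
  exact ⟨t ^ s, hts, fun i => by rw [this]⟩

instance sphCompact (m : ℕ) : CompactSpace (Sph m) := by
  have h : IsCompact {z : Fin m → ℂ | ∑ i, ‖z i‖ ^ 2 = 1} := by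
    apply Metric.isCompact_of_isClosed_isBounded
    · have : Continuous fun z : Fin m → ℂ => ∑ i, ‖z i‖ ^ 2 :=
        continuous_finset_sum _ fun i _ =>
          ((continuous_norm.comp (continuous_apply i)).pow 2)
      exact isClosed_eq this continuous_const
    · apply (Metric.isBounded_closedBall (x := (0 : Fin m → ℂ)) (r := 1)).subset
      intro z hz
      simp only [Metric.mem_closedBall, dist_zero_right]
      rw [pi_norm_le_iff_of_nonneg zero_le_one]
      intro i
      have hle : ‖z i‖ ^ 2 ≤ 1 := by
        calc ‖z i‖ ^ 2
            ≤ ∑ j, ‖z j‖ ^ 2 :=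
              Finset.single_le_sum (f := fun j => ‖z j‖ ^ 2)
                (fun j _ => by positivity) (Finset.mem_univ i)
          _ = 1 := hz
      have := norm_nonneg (z i)
      change ‖z i‖ ≤ 1
      nlinarith
  exact isCompact_iff_compactSpace.mp h

lemma l_bound {m : ℕ} (χ ω : Fin m → ℕ) (hχ : ∀ i, 1 ≤ χ i) (hω : ∀ i, 1 ≤ ω i)
    (hd : ∀ i, 1 ≤ dExp m χ ω i)
    (z w : Sph m) (l : ℝ) (hl : 0 < l)
    (hw : ∀ i, (w : Fin m → ℂ) i = (l : ℂ) ^ χ i * powVec m (dExp m χ ω) z i) :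
    l ∈ Set.Icc 1 (Real.sqrt ((m : ℝ) ^ (∑ i, dExp m χ ω i))) := by
  set d := dExp m χ ω with hdd
  set c : Fin m → ℝ := fun i => ‖(z : Fin m → ℂ) i‖ with hc
  have hc0 : ∀ i, 0 ≤ c i := fun i => norm_nonneg _
  have hc1 : ∀ i, c i ≤ 1 := fun i => sph_abs_le z i
  have hzsum : ∑ i, c i ^ 2 = 1 := z.2
  have habs : ∀ i, ‖(w : Fin m → ℂ) i‖ = l ^ χ i * c i ^ d i := by
    intro i
    rw [hw i, norm_mul, norm_pow, Complex.norm_real, Real.norm_of_nonneg hl.le]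
    simp only [powVec, norm_pow, hc]
  have hsum : ∑ i, (l ^ χ i * c i ^ d i) ^ 2 = 1 := by
    rw [← w.2]
    exact (Finset.sum_congr rfl fun i _ => by rw [habs i]).symm
  have hm : 0 < m := by
    rcases Nat.eq_zero_or_pos m with h | h
    · subst h; simpa using z.2
    · exact h
  haveI : Nonempty (Fin m) := Fin.pos_iff_nonempty.mp hm
  have hm1 : (1 : ℝ) ≤ (m : ℝ) := by exact_mod_cast hm
  have h1l : 1 ≤ l := by
    by_contra hl1
    push_neg at hl1
    have hterm : ∀ i, (l ^ χ i * c i ^ d i) ^ 2 ≤ l ^ 2 * c i ^ 2 := by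
      intro i
      have h1 : l ^ χ i ≤ l := pow_le_of_le_one hl.le hl1.le (by have := hχ i; omega)
      have h2 : c i ^ d i ≤ c i := pow_le_of_le_one (hc0 i) (hc1 i) (by have := hd i; omega)
      have h3 : l ^ χ i * c i ^ d i ≤ l * c i :=
        mul_le_mul h1 h2 (by positivity) hl.le
      calc (l ^ χ i * c i ^ d i) ^ 2 ≤ (l * c i) ^ 2 :=
            pow_le_pow_left₀ (by positivity) h3 2
        _ = l ^ 2 * c i ^ 2 := by ring
    have : (1 : ℝ) ≤ l ^ 2 := by
      calc (1:ℝ) = ∑ i, (l ^ χ i * c i ^ d i) ^ 2 := hsum.symm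
        _ ≤ ∑ i, l ^ 2 * c i ^ 2 := Finset.sum_le_sum fun i _ => hterm i
        _ = l ^ 2 * ∑ i, c i ^ 2 := by rw [Finset.mul_sum]
        _ = l ^ 2 := by rw [hzsum, mul_one]
    nlinarith
  refine ⟨h1l, ?_⟩
  have hj : ∃ j, (m : ℝ)⁻¹ ≤ c j ^ 2 := by
    by_contra hno
    push_neg at hno
    have : (1:ℝ) < 1 := by
      calc (1:ℝ) = ∑ i, c i ^ 2 := hzsum.symm
        _ < ∑ _i : Fin m, (m : ℝ)⁻¹ :=
            Finset.sum_lt_sum_of_nonempty Finset.univ_nonempty fun i _ => hno i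
        _ = 1 := by
          rw [Finset.sum_const, Finset.card_univ, Fintype.card_fin, nsmul_eq_mul]
          field_simp
    exact absurd this (lt_irrefl 1)
  obtain ⟨j, hj⟩ := hj
  have hterm : (l ^ χ j * c j ^ d j) ^ 2 ≤ 1 := by
    calc (l ^ χ j * c j ^ d j) ^ 2
        ≤ ∑ i, (l ^ χ i * c i ^ d i) ^ 2 :=
          Finset.single_le_sum (f := fun i => (l ^ χ i * c i ^ d i) ^ 2)
            (fun i _ => by positivity) (Finset.mem_univ j)
      _ = 1 := hsum
  have hexp : (l ^ χ j * c j ^ d j) ^ 2 = l ^ (2 * χ j) * (c j ^ 2) ^ d j := by ring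
  have h2 : l ^ 2 * ((m : ℝ)⁻¹) ^ d j ≤ 1 := by
    have ha : l ^ 2 ≤ l ^ (2 * χ j) := pow_le_pow_right₀ h1l (by have := hχ j; omega)
    have hb : ((m : ℝ)⁻¹) ^ d j ≤ (c j ^ 2) ^ d j :=
      pow_le_pow_left₀ (by positivity) hj _
    calc l ^ 2 * ((m : ℝ)⁻¹) ^ d j ≤ l ^ (2 * χ j) * (c j ^ 2) ^ d j :=
          mul_le_mul ha hb (by positivity) (by positivity)
      _ = (l ^ χ j * c j ^ d j) ^ 2 := hexp.symm
      _ ≤ 1 := hterm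
  have h3 : l ^ 2 ≤ (m : ℝ) ^ d j := by
    rw [inv_pow] at h2
    have hmp : (0:ℝ) < (m : ℝ) ^ d j := by positivity
    calc l ^ 2 = l ^ 2 * ((m : ℝ) ^ d j)⁻¹ * (m : ℝ) ^ d j := by field_simp
      _ ≤ 1 * (m : ℝ) ^ d j := mul_le_mul_of_nonneg_right h2 hmp.le
      _ = (m : ℝ) ^ d j := one_mul _
  have h4 : l ^ 2 ≤ (m : ℝ) ^ (∑ i, d i) := by
    refine le_trans h3 (pow_le_pow_right₀ hm1 ?_)
    exact Finset.single_le_sum (f := fun i => d i) (fun i _ => Nat.zero_le _)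
      (Finset.mem_univ j)
  exact (Real.le_sqrt' (by linarith : (0:ℝ) < l)).mpr h4

lemma graph_compact (m : ℕ) (χ ω : Fin m → ℕ) (hχ : ∀ i, 1 ≤ χ i) (hω : ∀ i, 1 ≤ ω i)
    (hd : ∀ i, 1 ≤ dExp m χ ω i) :
    IsCompact {p : Sph m × Sph m | IsNorm m χ (powVec m (dExp m χ ω) p.1) p.2} := by
  set d := dExp m χ ω with hdd
  set b := Real.sqrt ((m : ℝ) ^ (∑ i, d i)) with hb
  set K : Set ((Sph m × Sph m) × ℝ) :=
    {q | q.2 ∈ Set.Icc (1:ℝ) b ∧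
      ∀ i, (q.1.2 : Fin m → ℂ) i = (q.2 : ℂ) ^ χ i * powVec m d q.1.1 i} with hK
  have hKclosed : IsClosed K := by
    have h1 : IsClosed {q : (Sph m × Sph m) × ℝ | q.2 ∈ Set.Icc (1:ℝ) b} :=
      isClosed_Icc.preimage continuous_snd
    have h2 : ∀ i, IsClosed {q : (Sph m × Sph m) × ℝ |
        (q.1.2 : Fin m → ℂ) i = (q.2 : ℂ) ^ χ i * powVec m d q.1.1 i} := by
      intro i
      apply isClosed_eq
      · exact (continuous_apply i).comp
          (continuous_subtype_val.comp (continuous_snd.comp continuous_fst))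
      · exact ((Complex.continuous_ofReal.comp continuous_snd).pow _).mul
          (((continuous_apply i).comp
            (continuous_subtype_val.comp (continuous_fst.comp continuous_fst))).pow _)
    have hKeq : K = {q : (Sph m × Sph m) × ℝ | q.2 ∈ Set.Icc (1:ℝ) b} ∩
        ⋂ i, {q : (Sph m × Sph m) × ℝ |
          (q.1.2 : Fin m → ℂ) i = (q.2 : ℂ) ^ χ i * powVec m d q.1.1 i} := by
      ext q
      simp only [hK, Set.mem_setOf_eq, Set.mem_inter_iff, Set.mem_iInter]
    rw [hKeq]
    exact h1.inter (isClosed_iInter h2)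
  have hKcpt : IsCompact K := by
    refine IsCompact.of_isClosed_subset
      (isCompact_univ.prod (isCompact_Icc (a := (1:ℝ)) (b := b))) hKclosed ?_
    intro q hq
    exact Set.mem_prod.mpr ⟨Set.mem_univ _, hq.1⟩
  have himg : {p : Sph m × Sph m | IsNorm m χ (powVec m d p.1) p.2} = Prod.fst '' K := by
    ext p
    constructor
    · rintro ⟨l, hl, hw⟩
      refine ⟨(p, l), ⟨?_, hw⟩, rfl⟩
      exact l_bound χ ω hχ hω hd p.1 p.2 l hl hw
    · rintro ⟨⟨p', l⟩, ⟨⟨h1, _⟩, h2⟩, rfl⟩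
      exact ⟨l, by linarith, h2⟩
  rw [himg]
  exact hKcpt.image continuous_fst

end Auxiliary

/-- For weight vectors `ω, χ` with positive coordinates there is a unique
continuous map `e(χ/ω) : P(ω) → P(χ)` with `e(χ/ω)([z]_ω) = [N_χ(v)]_χ`, where
`v = (z_0^{d_0}, …, z_n^{d_n})` and `d_i = s(χ,ω)·χ_i/ω_i`; in particular `v ≠ 0` (so its
normalisation exists), and the right-hand side is independent of the representative `z`. -/
theorem statement0 (n : ℕ) (hn : 1 ≤ n) (ω χ : Fin (n + 1) → ℕ)
    (hω : ∀ i, 1 ≤ ω i) (hχ : ∀ i, 1 ≤ χ i) :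
    (∀ z : Sph (n + 1), powVec (n + 1) (dExp (n + 1) χ ω) z ≠ 0) ∧
    (∀ z : Sph (n + 1), ∃ w : Sph (n + 1),
      IsNorm (n + 1) χ (powVec (n + 1) (dExp (n + 1) χ ω) z) w) ∧
    (∃! e : WP (n + 1) ω → WP (n + 1) χ, IsEMap (n + 1) χ ω e) := by
  have hd : ∀ i, 1 ≤ dExp (n + 1) χ ω i := fun i => dExp_pos χ ω hω hχ i
  have hv : ∀ z : Sph (n + 1), ∃ j, powVec (n + 1) (dExp (n + 1) χ ω) z j ≠ 0 :=
    fun z => powVec_ne _ z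
  have hex : ∀ z : Sph (n + 1), ∃ w, IsNorm (n + 1) χ (powVec (n + 1) (dExp (n + 1) χ ω) z) w :=
    fun z => exists_isNorm χ hχ _ (hv z)
  refine ⟨fun z h => ?_, hex, ?_⟩
  · obtain ⟨j, hj⟩ := hv z
    exact hj (by rw [h]; rfl)
  · set f : Sph (n + 1) → Sph (n + 1) := fun z => (hex z).choose with hf
    have hfspec : ∀ z, IsNorm (n + 1) χ (powVec (n + 1) (dExp (n + 1) χ ω) z) (f z) :=
      fun z => (hex z).choose_spec
    have hfu : ∀ z w, IsNorm (n + 1) χ (powVec (n + 1) (dExp (n + 1) χ ω) z) w → f z = w :=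
      fun z w h => isNorm_unique χ hχ _ (hv z) _ _ (hfspec z) h
    have hGcpt := graph_compact (n + 1) χ ω hχ hω hd
    have hcont : Continuous f := by
      rw [continuous_iff_isClosed]
      intro C hC
      have himg : f ⁻¹' C = Prod.fst ''
          ({p : Sph (n + 1) × Sph (n + 1) |
            IsNorm (n + 1) χ (powVec (n + 1) (dExp (n + 1) χ ω) p.1) p.2}
            ∩ Set.univ ×ˢ C) := by
        ext z
        constructor
        · intro hz
          exact ⟨(z, f z), ⟨hfspec z, Set.mem_prod.mpr ⟨trivial, hz⟩⟩, rfl⟩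
        · rintro ⟨⟨z', w⟩, ⟨hw, hmem⟩, rfl⟩
          have hfz := hfu _ _ hw
          simp only [Set.mem_preimage]
          rw [hfz]
          exact hmem.2
      rw [himg]
      exact ((hGcpt.inter_right (isClosed_univ.prod hC)).image continuous_fst).isClosed
    have hsound : ∀ z z', wRel (n + 1) ω z z' →
        wpMk (n + 1) χ (f z) = wpMk (n + 1) χ (f z') := by
      intro z z' hr
      exact Quot.sound (isNorm_compat χ ω hχ hω z z' hr _ _ (hfspec z) (hfspec z'))
    set e : WP (n + 1) ω → WP (n + 1) χ :=
      Quot.lift (fun z => wpMk (n + 1) χ (f z)) hsound with he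
    have hemap : IsEMap (n + 1) χ ω e := by
      constructor
      · exact continuous_quot_lift _ (continuous_quot_mk.comp hcont)
      · intro z w hw
        show wpMk (n + 1) χ (f z) = wpMk (n + 1) χ w
        rw [hfu z w hw]
    refine ⟨e, hemap, ?_⟩
    intro e' he'
    funext x
    induction x using Quot.ind with
    | _ z =>
      show e' (wpMk (n + 1) ω z) = e (wpMk (n + 1) ω z)
      rw [he'.2 z (f z) (hfspec z), hemap.2 z (f z) (hfspec z)]
end
end

section
/- For weight vectors ω, χ : Fin (n+1) → ℕ with positive coordinates, the map e(χ/ω) : P(ω) → P(χ) is surjective, and for x, y ∈ P(ω) one has e(χ/ω)(x) = e(χ/ω)(y) if and only if y = g·x for some g in the finite abelian group C_{χ/ω}; consequently e(χ/ω) induces a homeomorphism from the orbit space P(ω)/C_{χ/ω} (with the quotient topology) onto P(χ). -/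
noncomputable section

/-- `orbRel m ω d x y` says `y = g·x` for some `g` in the finite abelian group
`C = ∏_i μ_{d i}` acting coordinatewise on `P(ω)`. -/
def orbRel (m : ℕ) (ω : Fin m → ℕ) (d : Fin m → ℕ) (x y : WP m ω) : Prop :=
  ∃ g : Fin m → ℂ, (∀ i, g i ^ d i = 1) ∧
    ∃ z w : Sph m, x = wpMk m ω z ∧ y = wpMk m ω w ∧
      ∀ i, (w : Fin m → ℂ) i = g i * (z : Fin m → ℂ) i

namespace WPAux

variable {m : ℕ}

/-- the auxiliary weight-sum function -/
def gfun (χ : Fin m → ℕ) (v : Fin m → ℂ) (l : ℝ) : ℝ :=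
  ∑ i, (l ^ χ i) ^ 2 * ‖v i‖ ^ 2

lemma pow_eq_one' {a : ℝ} {k : ℕ} (ha : 0 ≤ a) (hk : k ≠ 0) (h : a ^ k = 1) : a = 1 := by
  rcases lt_trichotomy a 1 with h1 | h1 | h1
  · have := pow_lt_one₀ ha h1 hk
    simp [h] at this
  · exact h1
  · have := one_lt_pow₀ h1 hk
    simp [h] at this

lemma gfun_cont (χ : Fin m → ℕ) (v : Fin m → ℂ) : Continuous (gfun χ v) := by
  unfold gfun
  exact continuous_finset_sum _ fun i _ => (((continuous_pow (χ i)).pow 2).mul continuous_const)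

lemma gfun_zero (χ : Fin m → ℕ) (hχ : ∀ i, 1 ≤ χ i) (v : Fin m → ℂ) : gfun χ v 0 = 0 := by
  unfold gfun
  refine Finset.sum_eq_zero fun i _ => ?_
  rw [zero_pow (by have := hχ i; omega : χ i ≠ 0)]
  ring

lemma gfun_lt (χ : Fin m → ℕ) (hχ : ∀ i, 1 ≤ χ i) (v : Fin m → ℂ)
    (hv : ∃ i, v i ≠ 0) {a b : ℝ} (ha : 0 ≤ a) (hab : a < b) :
    gfun χ v a < gfun χ v b := by
  obtain ⟨i₀, hi₀⟩ := hv
  refine Finset.sum_lt_sum (fun i _ => ?_) ⟨i₀, Finset.mem_univ _, ?_⟩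
  · have h1 : a ^ χ i ≤ b ^ χ i := pow_le_pow_left₀ ha hab.le _
    have h2 : (a ^ χ i) ^ 2 ≤ (b ^ χ i) ^ 2 := pow_le_pow_left₀ (pow_nonneg ha _) h1 _
    exact mul_le_mul_of_nonneg_right h2 (by positivity)
  · have h1 : a ^ χ i₀ < b ^ χ i₀ := pow_lt_pow_left₀ hab ha (by have := hχ i₀; omega)
    have h2 : (a ^ χ i₀) ^ 2 < (b ^ χ i₀) ^ 2 :=
      pow_lt_pow_left₀ h1 (pow_nonneg ha _) (by omega)
    have h3 : (0:ℝ) < ‖v i₀‖ ^ 2 := pow_pos (norm_pos_iff.mpr hi₀) 2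
    exact mul_lt_mul_of_pos_right h2 h3

lemma gfun_le (χ : Fin m → ℕ) (hχ : ∀ i, 1 ≤ χ i) (v : Fin m → ℂ)
    (hv : ∃ i, v i ≠ 0) {a b : ℝ} (ha : 0 ≤ a) (hab : a ≤ b) :
    gfun χ v a ≤ gfun χ v b := by
  rcases hab.lt_or_eq with h | h
  · exact (gfun_lt χ hχ v hv ha h).le
  · rw [h]

lemma lam_unique (χ : Fin m → ℕ) (hχ : ∀ i, 1 ≤ χ i) (v : Fin m → ℂ)
    (hv : ∃ i, v i ≠ 0) {a b : ℝ} (ha : 0 < a) (hb : 0 < b)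
    (hga : gfun χ v a = 1) (hgb : gfun χ v b = 1) : a = b := by
  rcases lt_trichotomy a b with h | h | h
  · have := gfun_lt χ hχ v hv ha.le h; rw [hga, hgb] at this; exact absurd this (lt_irrefl _)
  · exact h
  · have := gfun_lt χ hχ v hv hb.le h; rw [hga, hgb] at this; exact absurd this (lt_irrefl _)

lemma exists_lam (χ : Fin m → ℕ) (hχ : ∀ i, 1 ≤ χ i) (v : Fin m → ℂ)
    (hv : ∃ i, v i ≠ 0) : ∃ l : ℝ, 0 < l ∧ gfun χ v l = 1 := by
  obtain ⟨i₀, hi₀⟩ := hv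
  set c : ℝ := ‖v i₀‖ ^ 2 with hc
  have hcpos : 0 < c := pow_pos (norm_pos_iff.mpr hi₀) 2
  set L : ℝ := max 1 (1 / c) with hL
  have hL1 : (1:ℝ) ≤ L := le_max_left _ _
  have hgL : 1 ≤ gfun χ v L := by
    have h1 : (L ^ χ i₀) ^ 2 * c ≤ gfun χ v L := by
      unfold gfun
      exact Finset.single_le_sum (f := fun i => (L ^ χ i) ^ 2 * ‖v i‖ ^ 2)
        (fun i _ => by positivity) (Finset.mem_univ i₀)
    have h2 : L ≤ L ^ χ i₀ := by
      calc L = L ^ 1 := (pow_one L).symm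
      _ ≤ L ^ χ i₀ := pow_le_pow_right₀ hL1 (hχ i₀)
    have h3 : L ≤ (L ^ χ i₀) ^ 2 := by nlinarith
    have h4 : 1 / c ≤ L := le_max_right _ _
    calc (1:ℝ) = (1 / c) * c := by field_simp
    _ ≤ L * c := by nlinarith
    _ ≤ (L ^ χ i₀) ^ 2 * c := by nlinarith
    _ ≤ gfun χ v L := h1
  have h0 : gfun χ v 0 = 0 := gfun_zero χ hχ v
  have hIcc : (1:ℝ) ∈ Set.Icc (gfun χ v 0) (gfun χ v L) := by
    rw [h0]; exact ⟨zero_le_one, hgL⟩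
  obtain ⟨l, hl, hgl⟩ := intermediate_value_Icc (le_trans zero_le_one hL1)
    (gfun_cont χ v).continuousOn hIcc
  refine ⟨l, ?_, hgl⟩
  rcases hl.1.lt_or_eq with h | h
  · exact h
  · rw [← h, h0] at hgl; norm_num at hgl

lemma sph_ne (z : Sph m) : ∃ i, (z : Fin m → ℂ) i ≠ 0 := by
  by_contra h
  push_neg at h
  have := z.2
  rw [Finset.sum_eq_zero (fun i _ => by rw [h i]; simp)] at this
  norm_num at this

lemma sph_gfun_one (χ : Fin m → ℕ) (z : Sph m) : gfun χ (z : Fin m → ℂ) 1 = 1 := by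
  unfold gfun
  simpa using z.2

lemma powVec_ne (d : Fin m → ℕ) (z : Sph m) : ∃ i, powVec m d z i ≠ 0 := by
  obtain ⟨i, hi⟩ := sph_ne z
  exact ⟨i, pow_ne_zero _ hi⟩

lemma sVal_spec (χ ω : Fin m → ℕ) (hω : ∀ i, 1 ≤ ω i) :
    0 < sVal m χ ω ∧ ∀ i, ω i ∣ sVal m χ ω * χ i := by
  have hne : ({s : ℕ | 0 < s ∧ ∀ i, ω i ∣ s * χ i}).Nonempty := by
    refine ⟨∏ j, ω j, Finset.prod_pos (fun j _ => hω j), fun i => ?_⟩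
    exact Dvd.dvd.mul_right (Finset.dvd_prod_of_mem ω (Finset.mem_univ i)) _
  exact Nat.sInf_mem hne

lemma dExp_mul (χ ω : Fin m → ℕ) (hω : ∀ i, 1 ≤ ω i) (i : Fin m) :
    dExp m χ ω i * ω i = sVal m χ ω * χ i :=
  Nat.div_mul_cancel ((sVal_spec χ ω hω).2 i)

lemma dExp_pos (χ ω : Fin m → ℕ) (hω : ∀ i, 1 ≤ ω i) (hχ : ∀ i, 1 ≤ χ i) (i : Fin m) :
    0 < dExp m χ ω i := by
  have h := dExp_mul χ ω hω i
  have h1 : 0 < sVal m χ ω * χ i :=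
    Nat.mul_pos (sVal_spec χ ω hω).1 (hχ i)
  by_contra hc
  push_neg at hc
  interval_cases hd : dExp m χ ω i
  omega

lemma wRel_equivalence (χ : Fin m → ℕ) : Equivalence (wRel m χ) := by
  constructor
  · intro z; exact ⟨1, by simp, fun i => by simp⟩
  · rintro z w ⟨t, ht, hw⟩
    have ht0 : t ≠ 0 := by
      intro h; rw [h] at ht; simp at ht
    refine ⟨t⁻¹, by rw [norm_inv, ht]; norm_num, fun i => ?_⟩
    rw [hw i]
    field_simp
    rw [one_div, inv_pow, mul_assoc, inv_mul_cancel₀ (pow_ne_zero _ ht0), mul_one]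
  · rintro z w u ⟨t, ht, hw⟩ ⟨t', ht', hu⟩
    refine ⟨t' * t, by rw [norm_mul, ht, ht']; norm_num, fun i => ?_⟩
    rw [hu i, hw i, mul_pow]
    ring

lemma wpMk_eq_iff (χ : Fin m → ℕ) (z w : Sph m) :
    wpMk m χ z = wpMk m χ w ↔ wRel m χ z w := by
  rw [wpMk, wpMk, Quot.eq]
  exact (wRel_equivalence χ).eqvGen_iff

lemma mem_sph (χ : Fin m → ℕ) (v : Fin m → ℂ) {l : ℝ} (hl : 0 ≤ l)
    (hg : gfun χ v l = 1) :
    ∑ i, ‖(l : ℂ) ^ χ i * v i‖ ^ 2 = 1 := by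
  rw [← hg]
  unfold gfun
  refine Finset.sum_congr rfl fun i _ => ?_
  rw [norm_mul, norm_pow, Complex.norm_real, Real.norm_of_nonneg hl]
  ring

lemma exists_norm (χ : Fin m → ℕ) (hχ : ∀ i, 1 ≤ χ i) (v : Fin m → ℂ)
    (hv : ∃ i, v i ≠ 0) : ∃ w : Sph m, IsNorm m χ v w := by
  obtain ⟨l, hl, hgl⟩ := exists_lam χ hχ v hv
  exact ⟨⟨fun i => (l : ℂ) ^ χ i * v i, mem_sph χ v hl.le hgl⟩, l, hl, fun i => rfl⟩

lemma norm_gfun (χ : Fin m → ℕ) (v : Fin m → ℂ) {w : Sph m} {l : ℝ} (hl : 0 ≤ l)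
    (hw : ∀ i, (w : Fin m → ℂ) i = (l : ℂ) ^ χ i * v i) : gfun χ v l = 1 := by
  have := w.2
  rw [← this]
  unfold gfun
  refine Finset.sum_congr rfl fun i _ => ?_
  rw [hw i, norm_mul, norm_pow, Complex.norm_real, Real.norm_of_nonneg hl]
  ring

lemma norm_unique (χ : Fin m → ℕ) (hχ : ∀ i, 1 ≤ χ i) (v : Fin m → ℂ)
    (hv : ∃ i, v i ≠ 0) {w w' : Sph m} (h : IsNorm m χ v w) (h' : IsNorm m χ v w') :
    w = w' := by
  obtain ⟨l, hl, hw⟩ := h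
  obtain ⟨l', hl', hw'⟩ := h'
  have heq : l = l' :=
    lam_unique χ hχ v hv hl hl' (norm_gfun χ v hl.le hw) (norm_gfun χ v hl'.le hw')
  refine Subtype.ext (funext fun i => ?_)
  rw [hw i, hw' i, heq]

lemma exists_pre (χ ω : Fin m → ℕ) (hω : ∀ i, 1 ≤ ω i) (hχ : ∀ i, 1 ≤ χ i)
    (w : Sph m) : ∃ z : Sph m, IsNorm m χ (powVec m (dExp m χ ω) z) w := by
  set d := dExp m χ ω with hd
  have hdpos : ∀ i, 0 < d i := dExp_pos χ ω hω hχ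
  -- choose roots
  have hroot : ∀ i, ∃ c : ℂ, c ^ d i = (w : Fin m → ℂ) i := fun i =>
    IsAlgClosed.exists_pow_nat_eq _ (hdpos i)
  choose c hc using hroot
  have hcne : ∃ i, c i ≠ 0 := by
    obtain ⟨i, hi⟩ := sph_ne w
    refine ⟨i, fun h => hi ?_⟩
    rw [← hc i, h, zero_pow (hdpos i).ne']
  obtain ⟨z, l, hl, hz⟩ := exists_norm ω hω c hcne
  refine ⟨z, ((l ^ sVal m χ ω)⁻¹ : ℝ), by positivity, fun i => ?_⟩
  have hzi : powVec m d z i = ((l:ℂ) ^ (sVal m χ ω * χ i)) * (w : Fin m → ℂ) i := by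
    rw [powVec, hz i, mul_pow, ← pow_mul, hc i, ← dExp_mul χ ω hω i, Nat.mul_comm]
  rw [hzi]
  have hlne : ((l:ℂ) ^ (sVal m χ ω * χ i)) ≠ 0 := by
    apply pow_ne_zero
    exact_mod_cast (ne_of_gt (by exact_mod_cast hl))
  rw [← mul_assoc]
  convert (one_mul _).symm using 2
  push_cast
  rw [inv_pow, ← pow_mul]
  exact inv_mul_cancel₀ hlne

lemma fiber_forward (χ ω : Fin m → ℕ) (hω : ∀ i, 1 ≤ ω i) (hχ : ∀ i, 1 ≤ χ i)
    {z z' w w' : Sph m}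
    (hn : IsNorm m χ (powVec m (dExp m χ ω) z) w)
    (hn' : IsNorm m χ (powVec m (dExp m χ ω) z') w')
    (hww' : wRel m χ w w') :
    orbRel m ω (dExp m χ ω) (wpMk m ω z) (wpMk m ω z') := by
  set d := dExp m χ ω with hdd
  set s := sVal m χ ω with hss
  have hdpos : ∀ i, 0 < d i := dExp_pos χ ω hω hχ
  have hspos : 0 < s := (sVal_spec χ ω hω).1
  obtain ⟨l, hl, hw⟩ := hn
  obtain ⟨l', hl', hw'⟩ := hn'
  obtain ⟨t, ht, htw⟩ := hww'
  have ht0 : t ≠ 0 := fun h => by rw [h] at ht; simp at ht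
  set u : ℂ := t * (l : ℂ) / (l' : ℂ) with hu
  have hu0 : u ≠ 0 := by
    rw [hu]
    apply div_ne_zero
    · exact mul_ne_zero ht0 (by exact_mod_cast hl.ne')
    · exact_mod_cast hl'.ne'
  have key : ∀ i, ((z' : Fin m → ℂ) i) ^ d i = u ^ χ i * ((z : Fin m → ℂ) i) ^ d i := by
    intro i
    have h1 := htw i
    rw [hw i, hw' i] at h1
    simp only [powVec] at h1
    have hl'ne : ((l' : ℂ)) ^ χ i ≠ 0 := pow_ne_zero _ (by exact_mod_cast hl'.ne')
    rw [hu, div_pow, mul_pow]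
    field_simp
    linear_combination h1
  obtain ⟨τ, hτ⟩ := IsAlgClosed.exists_pow_nat_eq u hspos
  have hτ0 : τ ≠ 0 := by
    intro h
    rw [h, zero_pow hspos.ne'] at hτ
    exact hu0 hτ.symm
  have key2 : ∀ i, ((z' : Fin m → ℂ) i) ^ d i = (τ ^ ω i) ^ d i * ((z : Fin m → ℂ) i) ^ d i := by
    intro i
    rw [key i, ← pow_mul, Nat.mul_comm (ω i), dExp_mul χ ω hω i, ← hss, pow_mul, hτ]
  classical
  set g : Fin m → ℂ := fun i =>
    if (z : Fin m → ℂ) i = 0 then 1 else (z' : Fin m → ℂ) i / (τ ^ ω i * (z : Fin m → ℂ) i)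
    with hg
  have hden : ∀ i, (z : Fin m → ℂ) i ≠ 0 → τ ^ ω i * (z : Fin m → ℂ) i ≠ 0 :=
    fun i hi => mul_ne_zero (pow_ne_zero _ hτ0) hi
  have hg1 : ∀ i, g i ^ d i = 1 := by
    intro i
    rw [hg]
    by_cases hzi : (z : Fin m → ℂ) i = 0
    · simp [hzi]
    · simp only [hzi, if_false]
      rw [div_pow, key2 i, mul_pow]
      exact div_self (by
        exact mul_ne_zero (pow_ne_zero _ (pow_ne_zero _ hτ0)) (pow_ne_zero _ hzi))
  have hz' : ∀ i, (z' : Fin m → ℂ) i = g i * (τ ^ ω i * (z : Fin m → ℂ) i) := by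
    intro i
    rw [hg]
    by_cases hzi : (z : Fin m → ℂ) i = 0
    · simp only [hzi, if_true, one_mul, mul_zero]
      have := key2 i
      rw [hzi, zero_pow (hdpos i).ne', mul_zero] at this
      exact pow_eq_zero_iff (hdpos i).ne' |>.mp this
    · simp only [hzi, if_false]
      rw [div_mul_cancel₀]
      exact hden i hzi
  have habs_g : ∀ i, ‖g i‖ = 1 := by
    intro i
    have := congrArg norm (hg1 i)
    rw [norm_pow, norm_one] at this
    exact pow_eq_one' (norm_nonneg _) (hdpos i).ne' this
  have habs_τ : ‖τ‖ = 1 := by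
    have h1 : gfun ω (z : Fin m → ℂ) (‖τ‖) = 1 := by
      calc gfun ω (z : Fin m → ℂ) (‖τ‖)
          = ∑ i, ‖(z' : Fin m → ℂ) i‖ ^ 2 := by
            unfold gfun
            refine Finset.sum_congr rfl fun i _ => ?_
            rw [hz' i, norm_mul, norm_mul, habs_g i, norm_pow, one_mul]
            ring
        _ = 1 := z'.2
    exact lam_unique ω hω _ (sph_ne z) (norm_pos_iff.mpr hτ0) one_pos h1 (sph_gfun_one ω z)
  have hsph : ∑ i, ‖τ ^ ω i * (z : Fin m → ℂ) i‖ ^ 2 = 1 := by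
    calc ∑ i, ‖τ ^ ω i * (z : Fin m → ℂ) i‖ ^ 2
        = ∑ i, ‖(z : Fin m → ℂ) i‖ ^ 2 := by
          refine Finset.sum_congr rfl fun i _ => ?_
          rw [norm_mul, norm_pow, habs_τ, one_pow, one_mul]
      _ = 1 := z.2
  refine ⟨g, hg1, ⟨fun i => τ ^ ω i * (z : Fin m → ℂ) i, hsph⟩, z',
    Quot.sound ⟨τ, habs_τ, fun i => rfl⟩, rfl, fun i => hz' i⟩

variable (χ d : Fin m → ℕ)

def lam (hχ : ∀ i, 1 ≤ χ i) (z : Sph m) : ℝ :=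
  (exists_lam χ hχ (powVec m d z) (powVec_ne d z)).choose

lemma lam_spec (hχ : ∀ i, 1 ≤ χ i) (z : Sph m) :
    0 < lam χ d hχ z ∧ gfun χ (powVec m d z) (lam χ d hχ z) = 1 :=
  (exists_lam χ hχ (powVec m d z) (powVec_ne d z)).choose_spec

lemma gfun_cont_z (a : ℝ) : Continuous fun z : Sph m => gfun χ (powVec m d z) a := by
  unfold gfun powVec
  refine continuous_finset_sum _ fun i _ => ?_
  exact continuous_const.mul ((continuous_norm.comp
    (((continuous_apply i).comp continuous_subtype_val).pow (d i))).pow 2)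

lemma lam_continuous (hχ : ∀ i, 1 ≤ χ i) : Continuous (lam χ d hχ) := by
  rw [continuous_iff_continuousAt]
  intro z₀
  have hspec : ∀ z : Sph m, 0 < lam χ d hχ z ∧
      gfun χ (powVec m d z) (lam χ d hχ z) = 1 := lam_spec χ d hχ
  apply tendsto_order.2
  constructor
  · intro a ha
    rcases le_or_gt a 0 with h | h
    · exact Filter.Eventually.of_forall fun z => lt_of_le_of_lt h (hspec z).1
    · have hg : gfun χ (powVec m d z₀) a < 1 := by
        have := gfun_lt χ hχ _ (powVec_ne d z₀) h.le ha
        rwa [(hspec z₀).2] at this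
      have hev : ∀ᶠ z in nhds z₀, gfun χ (powVec m d z) a < 1 :=
        (gfun_cont_z χ d a).continuousAt.eventually_lt continuousAt_const hg
      refine hev.mono fun z hz => ?_
      by_contra hc
      push_neg at hc
      have := gfun_le χ hχ _ (powVec_ne d z) (hspec z).1.le hc
      rw [(hspec z).2] at this
      exact absurd (lt_of_le_of_lt this hz) (lt_irrefl _)
  · intro b hb
    have hb0 : 0 < b := lt_trans (hspec z₀).1 hb
    have hg : 1 < gfun χ (powVec m d z₀) b := by
      have := gfun_lt χ hχ _ (powVec_ne d z₀) (hspec z₀).1.le hb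
      rwa [(hspec z₀).2] at this
    have hev : ∀ᶠ z in nhds z₀, 1 < gfun χ (powVec m d z) b :=
      continuousAt_const.eventually_lt (gfun_cont_z χ d b).continuousAt hg
    refine hev.mono fun z hz => ?_
    by_contra hc
    push_neg at hc
    have := gfun_le χ hχ _ (powVec_ne d z) hb0.le hc
    rw [(hspec z).2] at this
    exact absurd (lt_of_lt_of_le hz this) (lt_irrefl _)

def phi (hχ : ∀ i, 1 ≤ χ i) (z : Sph m) : Sph m :=
  ⟨fun i => ((lam χ d hχ z : ℝ) : ℂ) ^ χ i * powVec m d z i,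
   mem_sph χ _ (lam_spec χ d hχ z).1.le (lam_spec χ d hχ z).2⟩

lemma phi_isNorm (hχ : ∀ i, 1 ≤ χ i) (z : Sph m) :
    IsNorm m χ (powVec m d z) (phi χ d hχ z) :=
  ⟨lam χ d hχ z, (lam_spec χ d hχ z).1, fun i => rfl⟩

lemma phi_continuous (hχ : ∀ i, 1 ≤ χ i) : Continuous (phi χ d hχ) := by
  apply Continuous.subtype_mk
  apply continuous_pi
  intro i
  exact ((Complex.continuous_ofReal.comp (lam_continuous χ d hχ)).pow (χ i)).mul
    (((continuous_apply i).comp continuous_subtype_val).pow (d i))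

instance : CompactSpace (Sph m) := by
  have hclosed : IsClosed {z : Fin m → ℂ | ∑ i, ‖z i‖ ^ 2 = 1} :=
    isClosed_eq (continuous_finset_sum _ fun i _ =>
      (continuous_norm.comp (continuous_apply i)).pow 2) continuous_const
  have hcpt : IsCompact {z : Fin m → ℂ | ∑ i, ‖z i‖ ^ 2 = 1} := by
    refine (isCompact_closedBall (0 : Fin m → ℂ) 1).of_isClosed_subset hclosed ?_
    intro z hz
    rw [Metric.mem_closedBall, dist_zero_right]
    rw [pi_norm_le_iff_of_nonneg zero_le_one]
    intro i
    have h1 : ‖z i‖ ^ 2 ≤ 1 := by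
      rw [← hz]
      exact Finset.single_le_sum (f := fun j => ‖z j‖ ^ 2)
        (fun j _ => by positivity) (Finset.mem_univ i)
    have h2 : ‖z i‖ = ‖z i‖ := rfl
    rw [h2]
    nlinarith [norm_nonneg (z i)]
  exact isCompact_iff_compactSpace.mp hcpt

open Topology in
theorem main (χ ω : Fin m → ℕ)
    (hω : ∀ i, 1 ≤ ω i) (hχ : ∀ i, 1 ≤ χ i)
    (e : WP m ω → WP m χ) (he : IsEMap m χ ω e) :
    Function.Surjective e ∧
    (∀ x y : WP m ω, e x = e y ↔ orbRel m ω (dExp m χ ω) x y) ∧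
    ∃ F : Quot (orbRel m ω (dExp m χ ω)) ≃ₜ WP m χ,
      ∀ x : WP m ω, F (Quot.mk _ x) = e x := by
  obtain ⟨hec, heq⟩ := he
  set d := dExp m χ ω with hd
  have hdpos : ∀ i, 0 < d i := dExp_pos χ ω hω hχ
  have hsurj : Function.Surjective e := by
    intro q
    obtain ⟨w, rfl⟩ := Quot.exists_rep q
    obtain ⟨z, hz⟩ := exists_pre χ ω hω hχ w
    exact ⟨wpMk m ω z, heq z w hz⟩
  have hfib : ∀ x y : WP m ω, e x = e y ↔ orbRel m ω d x y := by
    intro x y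
    constructor
    · intro h
      obtain ⟨z, rfl⟩ := Quot.exists_rep x
      obtain ⟨z', rfl⟩ := Quot.exists_rep y
      obtain ⟨w, hw⟩ := exists_norm χ hχ (powVec m d z) (powVec_ne d z)
      obtain ⟨w', hw'⟩ := exists_norm χ hχ (powVec m d z') (powVec_ne d z')
      have h1 : wpMk m χ w = wpMk m χ w' := by
        rw [← heq z w hw, ← heq z' w' hw']
        exact h
      exact fiber_forward χ ω hω hχ hw hw' ((wpMk_eq_iff χ w w').mp h1)
    · rintro ⟨g, hg, z, wz, rfl, rfl, hwz⟩
      have hpow : powVec m d wz = powVec m d z := by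
        funext i
        rw [powVec, powVec, hwz i, mul_pow, hg i, one_mul]
      obtain ⟨w0, hw0⟩ := exists_norm χ hχ (powVec m d z) (powVec_ne d z)
      have hw0' : IsNorm m χ (powVec m d wz) w0 := by rw [hpow]; exact hw0
      rw [heq z w0 hw0, heq wz w0 hw0']
  refine ⟨hsurj, hfib, ?_⟩
  have hsound : ∀ a b : WP m ω, orbRel m ω d a b → e a = e b :=
    fun a b h => (hfib a b).mpr h
  set F : Quot (orbRel m ω d) → WP m χ := Quot.lift e hsound with hF
  have hFcont : Continuous F := continuous_quot_lift hsound hec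
  have hcomp : e ∘ (Quot.mk (wRel m ω)) = (Quot.mk (wRel m χ)) ∘ (phi χ d hχ) := by
    funext z
    exact heq z (phi χ d hχ z) (phi_isNorm χ d hχ z)
  have hphisurj : Function.Surjective (phi χ d hχ) := by
    intro w
    obtain ⟨z, hz⟩ := exists_pre χ ω hω hχ w
    exact ⟨z, norm_unique χ hχ _ (powVec_ne d z) (phi_isNorm χ d hχ z) hz⟩
  have hphiq : IsQuotientMap ((Quot.mk (wRel m χ)) ∘ (phi χ d hχ)) :=
    isQuotientMap_quot_mk.comp
      (((phi_continuous χ d hχ).isClosedMap).isQuotientMap (phi_continuous χ d hχ) hphisurj)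
  have heqm : IsQuotientMap e := by
    refine IsQuotientMap.of_comp continuous_quot_mk hec ?_
    rw [hcomp]
    exact hphiq
  have hFq : IsQuotientMap F := by
    refine IsQuotientMap.of_comp continuous_quot_mk hFcont ?_
    have h2 : F ∘ Quot.mk (orbRel m ω d) = e := rfl
    rw [h2]
    exact heqm
  have hFbij : Function.Bijective F := by
    constructor
    · intro a b hab
      obtain ⟨x, rfl⟩ := Quot.exists_rep a
      obtain ⟨y, rfl⟩ := Quot.exists_rep b
      exact Quot.sound ((hfib x y).mp hab)
    · intro c
      obtain ⟨x, hx⟩ := hsurj c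
      exact ⟨Quot.mk _ x, hx⟩
  set E := Equiv.ofBijective F hFbij with hE
  have hEsymm : Continuous E.symm := by
    rw [hFq.continuous_iff]
    have h3 : (E.symm ∘ F) = id := by
      funext x
      exact E.symm_apply_apply x
    rw [h3]
    exact continuous_id
  exact ⟨Homeomorph.mk E hFcont hEsymm, fun x => rfl⟩

end WPAux

/-- The map `e(χ/ω) : P(ω) → P(χ)` is surjective; two points have the same
image iff they lie in the same orbit of `C_{χ/ω} = ∏_i μ_{d_i}`; and `e(χ/ω)` induces a
homeomorphism `P(ω)/C_{χ/ω} ≅ P(χ)`. -/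
theorem statement1 (n : ℕ) (hn : 1 ≤ n) (ω χ : Fin (n + 1) → ℕ)
    (hω : ∀ i, 1 ≤ ω i) (hχ : ∀ i, 1 ≤ χ i)
    (e : WP (n + 1) ω → WP (n + 1) χ) (he : IsEMap (n + 1) χ ω e) :
    Function.Surjective e ∧
    (∀ x y : WP (n + 1) ω, e x = e y ↔ orbRel (n + 1) ω (dExp (n + 1) χ ω) x y) ∧
    ∃ F : Quot (orbRel (n + 1) ω (dExp (n + 1) χ ω)) ≃ₜ WP (n + 1) χ,
      ∀ x : WP (n + 1) ω, F (Quot.mk _ x) = e x :=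
  WPAux.main χ ω hω hχ e he
end
end

section
/- For weight vectors ω, σ, χ : Fin (n+1) → ℕ with positive coordinates, the rational number s' = s(σ,ω)·s(χ,σ)/s(χ,ω) is a positive integer, and the composition e(χ/σ) ∘ e(σ/ω) : P(ω) → P(χ) equals both e(s') ∘ e(χ/ω) and e(χ/ω) ∘ e(s'), where e(s') denotes the s'-th power map on P(χ) and on P(ω) respectively. -/
noncomputable section

/-- `IsPowMap m χ r f` says that `f` is the `r`-th power map `e(r) : P(χ) → P(χ)`:
it is continuous and sends `[z]_χ` to `[N_χ(z_0^r, …, z_n^r)]_χ`. -/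
def IsPowMap (m : ℕ) (χ : Fin m → ℕ) (r : ℕ) (f : WP m χ → WP m χ) : Prop :=
  Continuous f ∧ ∀ z w : Sph m,
    IsNorm m χ (fun i => (z : Fin m → ℂ) i ^ r) w → f (wpMk m χ z) = wpMk m χ w


lemma sVal_mem (m : ℕ) (χ ω : Fin m → ℕ) (hχ : ∀ i, 1 ≤ χ i) (hω : ∀ i, 1 ≤ ω i) :
    0 < sVal m χ ω ∧ ∀ i, ω i ∣ sVal m χ ω * χ i := by
  have hne : {s : ℕ | 0 < s ∧ ∀ i, ω i ∣ s * χ i}.Nonempty := by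
    refine ⟨∏ i, ω i, Finset.prod_pos (fun i _ => hω i), fun i => ?_⟩
    exact dvd_mul_of_dvd_left (Finset.dvd_prod_of_mem _ (Finset.mem_univ i)) _
  exact Nat.sInf_mem hne

lemma sVal_dvd (m : ℕ) (χ ω : Fin m → ℕ) (hχ : ∀ i, 1 ≤ χ i) (hω : ∀ i, 1 ≤ ω i)
    {s : ℕ} (hs : 0 < s) (h : ∀ i, ω i ∣ s * χ i) : sVal m χ ω ∣ s := by
  obtain ⟨hpos, hmem⟩ := sVal_mem m χ ω hχ hω
  set a := sVal m χ ω with ha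
  apply Nat.dvd_of_mod_eq_zero
  by_contra h0
  have hmodpos : 0 < s % a := Nat.pos_of_ne_zero h0
  have hmod : ∀ i, ω i ∣ (s % a) * χ i := by
    intro i
    have hsum : a * (s / a) * χ i + (s % a) * χ i = s * χ i := by
      rw [← add_mul, Nat.div_add_mod]
    have hfst : ω i ∣ a * (s / a) * χ i := by
      have : ω i ∣ a * χ i := hmem i
      calc ω i ∣ a * χ i := this
        _ ∣ (a * χ i) * (s / a) := dvd_mul_right _ _
        _ = a * (s / a) * χ i := by ring
    exact (Nat.dvd_add_right hfst).mp (hsum ▸ h i)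
  have hle : a ≤ s % a := Nat.sInf_le ⟨hmodpos, hmod⟩
  exact absurd (Nat.mod_lt s hpos) (not_lt.mpr hle)

lemma abs_sq_smul (a : ℝ) (ha : 0 ≤ a) (k : ℕ) (v : ℂ) :
    ‖(a : ℂ) ^ k * v‖ ^ 2 = a ^ (2 * k) * ‖v‖ ^ 2 := by
  rw [norm_mul, norm_pow, Complex.norm_of_nonneg ha, mul_pow, ← pow_mul, mul_comm k 2]

lemma sphere_sum (m : ℕ) (χ : Fin m → ℕ) (v : Fin m → ℂ) (w : Sph m) {a : ℝ} (ha : 0 ≤ a)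
    (hw : ∀ i, (w : Fin m → ℂ) i = (a : ℂ) ^ χ i * v i) :
    ∑ i, a ^ (2 * χ i) * ‖v i‖ ^ 2 = 1 := by
  have := w.2
  calc ∑ i, a ^ (2 * χ i) * ‖v i‖ ^ 2
      = ∑ i, ‖(w : Fin m → ℂ) i‖ ^ 2 := by
        refine Finset.sum_congr rfl fun i _ => ?_
        rw [hw i, abs_sq_smul a ha]
    _ = 1 := w.2

lemma sphere_ne (m : ℕ) (z : Sph m) : ∃ j, (z : Fin m → ℂ) j ≠ 0 := by
  by_contra h
  push_neg at h
  have := z.2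
  simp [h] at this

lemma sum_strict (m : ℕ) (χ : Fin m → ℕ) (hχ : ∀ i, 1 ≤ χ i) (v : Fin m → ℂ)
    (j : Fin m) (hvj : v j ≠ 0) {a b : ℝ} (ha : 0 ≤ a) (hab : a < b) :
    ∑ i, a ^ (2 * χ i) * ‖v i‖ ^ 2 < ∑ i, b ^ (2 * χ i) * ‖v i‖ ^ 2 := by
  refine Finset.sum_lt_sum (fun i _ => ?_) ⟨j, Finset.mem_univ j, ?_⟩
  · exact mul_le_mul_of_nonneg_right (pow_le_pow_left₀ ha hab.le _) (by positivity)
  · have habs : 0 < ‖v j‖ ^ 2 := by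
      have := norm_ne_zero_iff.mpr hvj
      positivity
    refine mul_lt_mul_of_pos_right ?_ habs
    exact pow_lt_pow_left₀ hab ha (by have := hχ j; omega)

lemma normExists (m : ℕ) (χ : Fin m → ℕ) (hχ : ∀ i, 1 ≤ χ i) (v : Fin m → ℂ)
    (j : Fin m) (hvj : v j ≠ 0) : ∃ w : Sph m, IsNorm m χ v w := by
  set f : ℝ → ℝ := fun l => ∑ i, l ^ (2 * χ i) * ‖v i‖ ^ 2 with hf
  have hcont : Continuous f := by
    apply continuous_finset_sum
    exact fun i _ => (continuous_pow _).mul continuous_const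
  have hf0 : f 0 = 0 := by
    refine Finset.sum_eq_zero fun i _ => ?_
    rw [zero_pow (by have := hχ i; omega)]
    ring
  set a := ‖v j‖ with haj
  have ha : 0 < a := norm_pos_iff.mpr hvj
  set M : ℝ := max 1 (1 / a) with hM
  have hM1 : 1 ≤ M := le_max_left _ _
  have hM0 : 0 ≤ M := by linarith
  have hMa : 1 ≤ M * a := by
    have : 1 / a ≤ M := le_max_right _ _
    calc (1 : ℝ) = (1 / a) * a := by field_simp
      _ ≤ M * a := mul_le_mul_of_nonneg_right this ha.le
  have hfM : 1 ≤ f M := by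
    have hterm : 1 ≤ M ^ (2 * χ j) * a ^ 2 := by
      have h2 : M ^ 2 ≤ M ^ (2 * χ j) := pow_le_pow_right₀ hM1 (by have := hχ j; omega)
      calc (1:ℝ) = 1 ^ 2 := by ring
        _ ≤ (M * a) ^ 2 := by exact pow_le_pow_left₀ (by norm_num) hMa 2
        _ = M ^ 2 * a ^ 2 := by ring
        _ ≤ M ^ (2 * χ j) * a ^ 2 := mul_le_mul_of_nonneg_right h2 (by positivity)
    calc (1:ℝ) ≤ M ^ (2 * χ j) * a ^ 2 := hterm
      _ ≤ f M := Finset.single_le_sum (f := fun i => M ^ (2 * χ i) * ‖v i‖ ^ 2) (fun i _ => by positivity) (Finset.mem_univ j)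
  have hsub := intermediate_value_Icc hM0 hcont.continuousOn
  have h1mem : (1 : ℝ) ∈ Set.Icc (f 0) (f M) := by
    constructor
    · rw [hf0]; norm_num
    · exact hfM
  obtain ⟨l, hlmem, hfl⟩ := hsub h1mem
  have hl0 : 0 < l := by
    rcases lt_or_eq_of_le hlmem.1 with h | h
    · exact h
    · exfalso; rw [← h] at hfl; rw [hf0] at hfl; norm_num at hfl
  refine ⟨⟨fun i => (l : ℂ) ^ χ i * v i, ?_⟩, l, hl0, fun i => rfl⟩
  calc ∑ i, ‖(l : ℂ) ^ χ i * v i‖ ^ 2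
      = ∑ i, l ^ (2 * χ i) * ‖v i‖ ^ 2 :=
        Finset.sum_congr rfl fun i _ => abs_sq_smul l hl0.le _ _
    _ = 1 := hfl

lemma normUnique (m : ℕ) (χ : Fin m → ℕ) (hχ : ∀ i, 1 ≤ χ i) (v : Fin m → ℂ)
    (j : Fin m) (hvj : v j ≠ 0) (w1 w2 : Sph m)
    (h1 : IsNorm m χ v w1) (h2 : IsNorm m χ v w2) : w1 = w2 := by
  obtain ⟨a, ha, hwa⟩ := h1
  obtain ⟨b, hb, hwb⟩ := h2
  have hsa := sphere_sum m χ v w1 ha.le hwa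
  have hsb := sphere_sum m χ v w2 hb.le hwb
  have hab : a = b := by
    rcases lt_trichotomy a b with h | h | h
    · exfalso
      have := sum_strict m χ hχ v j hvj ha.le h
      rw [hsa, hsb] at this; exact lt_irrefl 1 this
    · exact h
    · exfalso
      have := sum_strict m χ hχ v j hvj hb.le h
      rw [hsa, hsb] at this; exact lt_irrefl 1 this
  exact Subtype.ext (funext fun i => by rw [hwa i, hwb i, hab])

/-- For weight vectors `ω, σ, χ` the number
`s' = s(σ,ω)·s(χ,σ)/s(χ,ω)` is a positive integer, and
`e(χ/σ) ∘ e(σ/ω) = e(s') ∘ e(χ/ω) = e(χ/ω) ∘ e(s')`. -/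
theorem statement4 (n : ℕ) (hn : 1 ≤ n) (ω σ χ : Fin (n + 1) → ℕ)
    (hω : ∀ i, 1 ≤ ω i) (hσ : ∀ i, 1 ≤ σ i) (hχ : ∀ i, 1 ≤ χ i)
    (e1 : WP (n + 1) ω → WP (n + 1) σ) (h1 : IsEMap (n + 1) σ ω e1)
    (e2 : WP (n + 1) σ → WP (n + 1) χ) (h2 : IsEMap (n + 1) χ σ e2)
    (e3 : WP (n + 1) ω → WP (n + 1) χ) (h3 : IsEMap (n + 1) χ ω e3)
    (pχ : WP (n + 1) χ → WP (n + 1) χ)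
    (hpχ : IsPowMap (n + 1) χ (sVal (n + 1) σ ω * sVal (n + 1) χ σ / sVal (n + 1) χ ω) pχ)
    (pω : WP (n + 1) ω → WP (n + 1) ω)
    (hpω : IsPowMap (n + 1) ω (sVal (n + 1) σ ω * sVal (n + 1) χ σ / sVal (n + 1) χ ω) pω) :
    sVal (n + 1) χ ω ∣ sVal (n + 1) σ ω * sVal (n + 1) χ σ ∧
    0 < sVal (n + 1) σ ω * sVal (n + 1) χ σ / sVal (n + 1) χ ω ∧
    e2 ∘ e1 = pχ ∘ e3 ∧ e2 ∘ e1 = e3 ∘ pω := by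
  obtain ⟨hs1pos, hs1⟩ := sVal_mem (n + 1) σ ω hσ hω
  obtain ⟨hs2pos, hs2⟩ := sVal_mem (n + 1) χ σ hχ hσ
  obtain ⟨hs3pos, hs3⟩ := sVal_mem (n + 1) χ ω hχ hω
  set s1 := sVal (n + 1) σ ω with hs1d
  set s2 := sVal (n + 1) χ σ with hs2d
  set s3 := sVal (n + 1) χ ω with hs3d
  have hdvd : s3 ∣ s1 * s2 := by
    refine sVal_dvd (n + 1) χ ω hχ hω (Nat.mul_pos hs1pos hs2pos) fun i => ?_
    rw [mul_assoc]
    exact (hs1 i).trans (mul_dvd_mul_left s1 (hs2 i))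
  set s' := s1 * s2 / s3 with hs'd
  have hs'mul : s' * s3 = s1 * s2 := Nat.div_mul_cancel hdvd
  have hs'pos : 0 < s' := by
    rcases Nat.eq_zero_or_pos s' with h | h
    · exfalso; rw [h, zero_mul] at hs'mul
      exact absurd hs'mul.symm (Nat.mul_pos hs1pos hs2pos).ne'
    · exact h
  have hd1 : ∀ i, ω i * dExp (n + 1) σ ω i = s1 * σ i := fun i => Nat.mul_div_cancel' (hs1 i)
  have hd2 : ∀ i, σ i * dExp (n + 1) χ σ i = s2 * χ i := fun i => Nat.mul_div_cancel' (hs2 i)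
  have hd3 : ∀ i, ω i * dExp (n + 1) χ ω i = s3 * χ i := fun i => Nat.mul_div_cancel' (hs3 i)
  have hkey : ∀ i, dExp (n + 1) σ ω i * dExp (n + 1) χ σ i = s' * dExp (n + 1) χ ω i := by
    intro i
    have hmul : (ω i * σ i) * (dExp (n + 1) σ ω i * dExp (n + 1) χ σ i)
        = (ω i * σ i) * (s' * dExp (n + 1) χ ω i) := by
      calc (ω i * σ i) * (dExp (n + 1) σ ω i * dExp (n + 1) χ σ i)
          = (ω i * dExp (n + 1) σ ω i) * (σ i * dExp (n + 1) χ σ i) := by ring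
        _ = (s1 * σ i) * (s2 * χ i) := by rw [hd1 i, hd2 i]
        _ = σ i * (s' * s3) * χ i := by rw [hs'mul]; ring
        _ = σ i * s' * (s3 * χ i) := by ring
        _ = σ i * s' * (ω i * dExp (n + 1) χ ω i) := by rw [hd3 i]
        _ = (ω i * σ i) * (s' * dExp (n + 1) χ ω i) := by ring
    exact Nat.eq_of_mul_eq_mul_left (Nat.mul_pos (hω i) (hσ i)) hmul
  have key : ∀ z : Sph (n + 1),
      e2 (e1 (wpMk (n + 1) ω z)) = pχ (e3 (wpMk (n + 1) ω z)) ∧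
      e2 (e1 (wpMk (n + 1) ω z)) = e3 (pω (wpMk (n + 1) ω z)) := by
    intro z
    obtain ⟨j, hzj⟩ := sphere_ne (n + 1) z
    obtain ⟨w1, hw1⟩ := normExists (n + 1) σ hσ (powVec (n + 1) (dExp (n + 1) σ ω) z) j
      (pow_ne_zero _ hzj)
    obtain ⟨l1, hl1, hw1e⟩ := hw1
    have hw1j : (w1 : Fin (n + 1) → ℂ) j ≠ 0 := by
      rw [hw1e j]
      exact mul_ne_zero (pow_ne_zero _ (Complex.ofReal_ne_zero.mpr hl1.ne'))
        (pow_ne_zero _ hzj)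
    obtain ⟨w2, hw2⟩ := normExists (n + 1) χ hχ (powVec (n + 1) (dExp (n + 1) χ σ) w1) j
      (pow_ne_zero _ hw1j)
    have hw2' := hw2
    obtain ⟨l2, hl2, hw2e⟩ := hw2
    have hn2 : IsNorm (n + 1) χ (fun i => (z : Fin (n + 1) → ℂ) i ^ (s' * dExp (n + 1) χ ω i)) w2 := by
      refine ⟨l2 * l1 ^ s2, by positivity, fun i => ?_⟩
      rw [hw2e i]
      show (l2 : ℂ) ^ χ i * ((w1 : Fin (n + 1) → ℂ) i ^ dExp (n + 1) χ σ i) = _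
      rw [hw1e i]
      simp only [powVec]
      rw [mul_pow, ← pow_mul, ← pow_mul, hd2 i, hkey i]
      push_cast
      rw [mul_pow, ← pow_mul, mul_comm s2 (χ i), pow_mul, pow_mul]
      ring
    have hez : e2 (e1 (wpMk (n + 1) ω z)) = wpMk (n + 1) χ w2 := by
      rw [h1.2 z w1 ⟨l1, hl1, hw1e⟩, h2.2 w1 w2 hw2']
    obtain ⟨w3, hw3⟩ := normExists (n + 1) χ hχ (powVec (n + 1) (dExp (n + 1) χ ω) z) j
      (pow_ne_zero _ hzj)
    have hw3' := hw3
    obtain ⟨l3, hl3, hw3e⟩ := hw3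
    have hw3j : (w3 : Fin (n + 1) → ℂ) j ≠ 0 := by
      rw [hw3e j]
      exact mul_ne_zero (pow_ne_zero _ (Complex.ofReal_ne_zero.mpr hl3.ne'))
        (pow_ne_zero _ hzj)
    constructor
    · obtain ⟨w4, hw4⟩ := normExists (n + 1) χ hχ (fun i => (w3 : Fin (n + 1) → ℂ) i ^ s') j
        (pow_ne_zero _ hw3j)
      have hw4' := hw4
      obtain ⟨l4, hl4, hw4e⟩ := hw4
      have hn4 : IsNorm (n + 1) χ (fun i => (z : Fin (n + 1) → ℂ) i ^ (s' * dExp (n + 1) χ ω i)) w4 := by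
        refine ⟨l4 * l3 ^ s', by positivity, fun i => ?_⟩
        rw [hw4e i]
        show (l4 : ℂ) ^ χ i * ((w3 : Fin (n + 1) → ℂ) i ^ s') = _
        rw [hw3e i]
        simp only [powVec]
        rw [mul_pow, ← pow_mul, ← pow_mul, mul_comm (χ i) s', mul_comm (dExp (n + 1) χ ω i) s']
        push_cast
        rw [mul_pow, ← pow_mul, mul_comm s' (χ i), pow_mul, pow_mul]
        ring
      have h24 : w2 = w4 := normUnique (n + 1) χ hχ _ j (pow_ne_zero _ hzj) w2 w4 hn2 hn4
      rw [hez, h3.2 z w3 hw3', hpχ.2 w3 w4 hw4', h24]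
    · obtain ⟨u, hu⟩ := normExists (n + 1) ω hω (fun i => (z : Fin (n + 1) → ℂ) i ^ s') j
        (pow_ne_zero _ hzj)
      have hu' := hu
      obtain ⟨lu, hlu, hue⟩ := hu
      have huj : (u : Fin (n + 1) → ℂ) j ≠ 0 := by
        rw [hue j]
        exact mul_ne_zero (pow_ne_zero _ (Complex.ofReal_ne_zero.mpr hlu.ne'))
          (pow_ne_zero _ hzj)
      obtain ⟨w5, hw5⟩ := normExists (n + 1) χ hχ (powVec (n + 1) (dExp (n + 1) χ ω) u) j
        (pow_ne_zero _ huj)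
      have hw5' := hw5
      obtain ⟨l5, hl5, hw5e⟩ := hw5
      have hn5 : IsNorm (n + 1) χ (fun i => (z : Fin (n + 1) → ℂ) i ^ (s' * dExp (n + 1) χ ω i)) w5 := by
        refine ⟨l5 * lu ^ s3, by positivity, fun i => ?_⟩
        rw [hw5e i]
        show (l5 : ℂ) ^ χ i * ((u : Fin (n + 1) → ℂ) i ^ dExp (n + 1) χ ω i) = _
        rw [hue i]
        simp only [powVec]
        rw [mul_pow, ← pow_mul, ← pow_mul, hd3 i]
        push_cast
        rw [mul_pow, ← pow_mul, mul_comm s3 (χ i), pow_mul, pow_mul]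
        ring
      have h25 : w2 = w5 := normUnique (n + 1) χ hχ _ j (pow_ne_zero _ hzj) w2 w5 hn2 hn5
      rw [hez, hpω.2 z u hu', h3.2 u w5 hw5', h25]
  exact ⟨hdvd, hs'pos, funext (Quot.ind fun z => (key z).1), funext (Quot.ind fun z => (key z).2)⟩
end
end
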